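/- For every positive integer n there exists ε > 0 such that: for every monic polynomial p ∈ ℤ[X] with natDegree p = n, writing M for the product, over the multiset of complex roots of p (counted with multiplicity), of max(1, |z|), one has either M = 1 or M ≥ 1 + ε. -/

import Mathlib

open Polynomial Multiset NNReal

noncomputable def MmC (s : Multiset ℂ) : ℝ≥0 :=
  (s.map fun z => max 1 ‖z‖₊).prod

lemma one_le_MmC (s : Multiset ℂ) : 1 ≤ MmC s := by
  apply Multiset.one_le_prod_of_one_le
  intro x hx
  obtain ⟨z, _, rfl⟩ := Multiset.mem_map.mp hx
  exact le_max_left _ _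

lemma prod_le_MmC {t s : Multiset ℂ} (h : t ≤ s) : ‖t.prod‖₊ ≤ MmC s := by
  obtain ⟨u, rfl⟩ := Multiset.le_iff_exists_add.mp h
  have h1 : ‖t.prod‖₊ = (t.map fun z => ‖z‖₊).prod :=
    map_multiset_prod (nnnormHom.toMonoidHom : ℂ →* ℝ≥0) t
  have h2 : (t.map fun z => ‖z‖₊).prod ≤ (t.map fun z => max 1 ‖z‖₊).prod :=
    Multiset.prod_map_le_prod_map _ _ fun z _ => le_max_right _ _
  have h3 : MmC (t + u) = (t.map fun z => max 1 ‖z‖₊).prod * (u.map fun z => max 1 ‖z‖₊).prod := by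
    simp [MmC, Multiset.map_add]
  rw [h3, h1]
  exact le_trans h2 (le_mul_of_one_le_right' (one_le_MmC u))
  
lemma esymm_le (s : Multiset ℂ) (j : ℕ) :
    ‖s.esymm j‖₊ ≤ (Multiset.card s).choose j * MmC s := by
  rw [Multiset.esymm]
  calc ‖((s.powersetCard j).map Multiset.prod).sum‖₊
      ≤ (((s.powersetCard j).map Multiset.prod).map fun z => ‖z‖₊).sum :=
        nnnorm_multiset_sum_le _
    _ ≤ (Multiset.card (((s.powersetCard j).map Multiset.prod).map fun z => ‖z‖₊)) • MmC s := by
        apply Multiset.sum_le_card_nsmul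
        intro x hx
        simp only [Multiset.map_map, Multiset.mem_map, Function.comp] at hx
        obtain ⟨t, ht, rfl⟩ := hx
        exact prod_le_MmC (Multiset.mem_powersetCard.mp ht).1
    _ = (Multiset.card s).choose j * MmC s := by
        simp [Multiset.card_powersetCard, nsmul_eq_mul]

noncomputable def Mm (p : Polynomial ℤ) : ℝ :=
  ((p.map (Int.castRingHom ℂ)).roots.map fun z => max 1 ‖z‖).prod

lemma Mm_eq (p : Polynomial ℤ) : Mm p = (MmC ((p.map (Int.castRingHom ℂ)).roots) : ℝ) := by
  rw [Mm, MmC, NNReal.coe_multiset_prod, Multiset.map_map]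
  apply congrArg
  apply Multiset.map_congr rfl
  intro z _
  simp [Function.comp]

lemma one_le_Mm (p : Polynomial ℤ) : 1 ≤ Mm p := by
  rw [Mm_eq]
  exact_mod_cast one_le_MmC _

lemma coeff_bound {n : ℕ} {p : Polynomial ℤ} (hp : p.Monic) (hdeg : p.natDegree = n)
    (hM : Mm p ≤ 2) (k : ℕ) (hk : k ≤ n) : |p.coeff k| ≤ 2 ^ (n + 1) := by
  set q : Polynomial ℂ := p.map (Int.castRingHom ℂ) with hq
  have hqm : q.Monic := hp.map _
  have hqdeg : q.natDegree = n := by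
    rw [hq, Polynomial.natDegree_map_eq_of_injective (by exact_mod_cast Int.cast_injective), hdeg]
  have hroots : Multiset.card q.roots = q.natDegree :=
    Polynomial.splits_iff_card_roots.mp (IsAlgClosed.splits q)
  have hcoeff : q.coeff k = q.leadingCoeff * (-1) ^ (q.natDegree - k) *
      q.roots.esymm (q.natDegree - k) :=
    Polynomial.coeff_eq_esymm_roots_of_card hroots (hqdeg ▸ hk)
  have hlc : q.leadingCoeff = 1 := hqm
  have hnn : ‖q.coeff k‖₊ ≤ n.choose (n - k) * MmC q.roots := by
    rw [hcoeff, hlc]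
    calc ‖(1 : ℂ) * (-1) ^ (q.natDegree - k) * q.roots.esymm (q.natDegree - k)‖₊
        = ‖q.roots.esymm (q.natDegree - k)‖₊ := by
          rw [nnnorm_mul, nnnorm_mul, nnnorm_one, nnnorm_pow, nnnorm_neg, nnnorm_one]
          simp
      _ ≤ (Multiset.card q.roots).choose (q.natDegree - k) * MmC q.roots := esymm_le _ _
      _ = n.choose (n - k) * MmC q.roots := by rw [hroots, hqdeg]
  -- transfer to ℝ
  have hcast : q.coeff k = ((p.coeff k : ℤ) : ℂ) := by
    rw [hq, Polynomial.coeff_map]; rfl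
  have hR : (|p.coeff k| : ℝ) ≤ (n.choose (n - k) : ℝ) * Mm p := by
    have := hnn
    rw [hcast, Complex.nnnorm_intCast] at this
    have h2 : (‖p.coeff k‖₊ : ℝ) ≤ ((n.choose (n - k) * MmC q.roots : ℝ≥0) : ℝ) :=
      NNReal.coe_le_coe.mpr this
    rw [coe_nnnorm, Int.norm_eq_abs] at h2
    rw [Mm_eq]
    push_cast at h2 ⊢
    exact h2
  have hchoose : (n.choose (n - k) : ℝ) ≤ 2 ^ n := by
    have h1 : n.choose (n - k) ≤ 2 ^ n := by
      calc n.choose (n - k) ≤ ∑ m ∈ Finset.range (n + 1), n.choose m :=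
            Finset.single_le_sum (f := fun m => n.choose m) (fun _ _ => Nat.zero_le _)
              (Finset.mem_range.mpr (Nat.lt_succ_of_le (Nat.sub_le _ _)))
        _ = 2 ^ n := Nat.sum_range_choose n
    exact_mod_cast h1
  have hfinal : (|p.coeff k| : ℝ) ≤ 2 ^ (n + 1) := by
    calc (|p.coeff k| : ℝ) ≤ (n.choose (n - k) : ℝ) * Mm p := hR
      _ ≤ 2 ^ n * 2 := by
          apply mul_le_mul hchoose hM (le_trans zero_le_one (one_le_Mm p))
          positivity
      _ = 2 ^ (n + 1) := by ring
  exact_mod_cast hfinal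

lemma small_finite (n : ℕ) :
    {p : Polynomial ℤ | p.Monic ∧ p.natDegree = n ∧ Mm p ≤ 2}.Finite := by
  set S := {p : Polynomial ℤ | p.Monic ∧ p.natDegree = n ∧ Mm p ≤ 2}
  apply Set.Finite.of_finite_image (f := fun p => fun i : Fin (n + 1) => p.coeff i)
  · apply Set.Finite.subset
      (Set.Finite.pi fun i : Fin (n + 1) =>
        Set.finite_Icc (-(2 ^ (n + 1)) : ℤ) (2 ^ (n + 1)))
    rintro _ ⟨p, ⟨hm, hd, hM⟩, rfl⟩
    intro i _
    have := coeff_bound hm hd hM i (Nat.lt_succ_iff.mp i.isLt)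
    rw [Set.mem_Icc]
    constructor
    · linarith [neg_abs_le (p.coeff i)]
    · linarith [le_abs_self (p.coeff i)]
  · rintro p ⟨hm, hd, _⟩ q ⟨hm', hd', _⟩ h
    ext i
    by_cases hi : i ≤ n
    · exact congrFun h ⟨i, Nat.lt_succ_of_le hi⟩
    · rw [Polynomial.coeff_eq_zero_of_natDegree_lt (hd ▸ lt_of_not_ge hi),
        Polynomial.coeff_eq_zero_of_natDegree_lt (hd' ▸ lt_of_not_ge hi)]

theorem mahler_measure_gap (n : ℕ) (hn : 0 < n) :
    ∃ ε : ℝ, 0 < ε ∧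
      ∀ p : Polynomial ℤ, p.Monic → p.natDegree = n →
        (((p.map (Int.castRingHom ℂ)).roots.map
            fun z => max 1 ‖z‖).prod = 1 ∨
         1 + ε ≤ ((p.map (Int.castRingHom ℂ)).roots.map
            fun z => max 1 ‖z‖).prod) := by
  set S := {p : Polynomial ℤ | p.Monic ∧ p.natDegree = n ∧ Mm p ≤ 2} with hS
  have hV : (Mm '' S ∩ Set.Ioi 1).Finite := ((small_finite n).image Mm).inter_of_left _
  by_cases hne : (Mm '' S ∩ Set.Ioi 1).Nonempty
  · set F := hV.toFinset with hF
    have hFne : F.Nonempty := by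
      rwa [Set.Finite.toFinset_nonempty]
    set m := F.min' hFne with hm
    have hmV : m ∈ Mm '' S ∩ Set.Ioi 1 := hV.mem_toFinset.mp (F.min'_mem hFne)
    have hm1 : 1 < m := hmV.2
    refine ⟨min (m - 1) 1, by simp [hm1], ?_⟩
    intro p hpm hpd
    have hMp : ((p.map (Int.castRingHom ℂ)).roots.map
        fun z => max 1 ‖z‖).prod = Mm p := rfl
    rw [hMp]
    by_cases h1 : Mm p = 1
    · exact Or.inl h1
    · right
      have hgt : 1 < Mm p := lt_of_le_of_ne (one_le_Mm p) (Ne.symm h1)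
      by_cases h2 : Mm p ≤ 2
      · have hmem : Mm p ∈ F := by
          rw [hF, Set.Finite.mem_toFinset]
          exact ⟨⟨p, ⟨hpm, hpd, h2⟩, rfl⟩, hgt⟩
        have := F.min'_le _ hmem
        calc 1 + min (m - 1) 1 ≤ 1 + (m - 1) := by
              exact add_le_add_right (min_le_left _ _) 1
          _ = m := by ring
          _ ≤ Mm p := this
      · calc 1 + min (m - 1) 1 ≤ 1 + 1 := add_le_add_right (min_le_right _ _) 1
          _ ≤ Mm p := by linarith [lt_of_not_ge h2]
  · refine ⟨1, one_pos, ?_⟩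
    intro p hpm hpd
    have hMp : ((p.map (Int.castRingHom ℂ)).roots.map
        fun z => max 1 ‖z‖).prod = Mm p := rfl
    rw [hMp]
    by_cases h1 : Mm p = 1
    · exact Or.inl h1
    · right
      have hgt : 1 < Mm p := lt_of_le_of_ne (one_le_Mm p) (Ne.symm h1)
      by_cases h2 : Mm p ≤ 2
      · exact absurd ⟨⟨p, ⟨hpm, hpd, h2⟩, rfl⟩, hgt⟩ (fun h => hne ⟨Mm p, h⟩)
      · linarith [lt_of_not_ge h2]
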